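/- The map sending a unitary operator U on a complex Hilbert space H to Ran{v ↦ ((1+U)v, −i(1−U)v)} ⊆ H ⊕ H (the Cayley graph map) is a bijection from the unitary group of H onto the set of lagrangian subspaces of Ĥ = H ⊕ H, where lagrangian means JL = L⊥ for J(x,y) = (y,−x). -/

import Mathlib

noncomputable section

variable (H : Type) [NormedAddCommGroup H] [InnerProductSpace ℂ H] [CompleteSpace H]

/-- `Ĥ = H ⊕ H` with the Hilbert (l²) structure. -/
abbrev Hh := WithLp 2 (H × H)

/-- The complex structure `J(x,y) = (y, -x)` on `Ĥ = H ⊕ H`. -/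
def hatJ : Hh H →L[ℂ] Hh H :=
  (WithLp.prodContinuousLinearEquiv 2 ℂ H H).symm.toContinuousLinearMap ∘L
    ((ContinuousLinearMap.snd ℂ H H).prod (-(ContinuousLinearMap.fst ℂ H H))) ∘L
    (WithLp.prodContinuousLinearEquiv 2 ℂ H H).toContinuousLinearMap

/-- A subspace `L ⊆ Ĥ` is lagrangian if `JL = L⊥`. -/
def IsLagrangian (L : Submodule ℂ (Hh H)) : Prop :=
  L.map (hatJ H).toLinearMap = Lᗮ

/-- The Cayley graph map: `𝒞(U) = Ran {v ↦ ((1+U)v, -i(1-U)v)} ⊆ H ⊕ H`. -/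
def cayleyGraph (U : H →L[ℂ] H) : Submodule ℂ (Hh H) :=
  LinearMap.range
    (((WithLp.prodContinuousLinearEquiv 2 ℂ H H).symm.toContinuousLinearMap ∘L
      ((1 + U).prod ((-Complex.I) • (1 - U)))) : H →L[ℂ] Hh H).toLinearMap

set_option linter.unusedSectionVars false

section AuxLemmas

variable {H}
def mk2 (a b : H) : Hh H := (WithLp.equiv 2 (H × H)).symm (a, b)
@[simp] lemma mk2_fst (a b : H) : (mk2 a b : Hh H).fst = a := rfl
@[simp] lemma mk2_snd (a b : H) : (mk2 a b : Hh H).snd = b := rfl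
lemma mk2_eta (x : Hh H) : mk2 x.fst x.snd = x := rfl
lemma mk2_add (a b c d : H) : (mk2 a b : Hh H) + mk2 c d = mk2 (a+c) (b+d) := rfl
lemma mk2_smul (c : ℂ) (a b : H) : c • (mk2 a b : Hh H) = mk2 (c • a) (c • b) := rfl
lemma mk2_neg (a b : H) : -(mk2 a b : Hh H) = mk2 (-a) (-b) := rfl
lemma mk2_ext_iff {a b c d : H} : (mk2 a b : Hh H) = mk2 c d ↔ a = c ∧ b = d := by
  constructor
  · intro h; exact ⟨congrArg WithLp.fst h, congrArg WithLp.snd h⟩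
  · rintro ⟨rfl, rfl⟩; rfl
@[simp] lemma hatJ_mk2 (a b : H) : hatJ H (mk2 a b) = mk2 b (-a) := rfl
lemma hatJ_apply (x : Hh H) : hatJ H x = mk2 x.snd (-x.fst) := rfl
lemma hatJ_hatJ (x : Hh H) : hatJ H (hatJ H x) = -x := rfl
lemma inner_mk2 (a b c d : H) : (inner ℂ (mk2 a b : Hh H) (mk2 c d) : ℂ) = inner ℂ a c + inner ℂ b d := rfl

/-- The Cayley transform vector. -/
def Tv (U : H →L[ℂ] H) (v : H) : Hh H := mk2 (v + U v) (-Complex.I • (v - U v))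

lemma mem_cayleyGraph {U : H →L[ℂ] H} {x : Hh H} :
    x ∈ cayleyGraph H U ↔ ∃ v, Tv U v = x := by
  simp only [cayleyGraph, LinearMap.mem_range, ContinuousLinearMap.coe_coe,
    ContinuousLinearMap.comp_apply, ContinuousLinearMap.prod_apply,
    ContinuousLinearMap.add_apply, ContinuousLinearMap.one_apply,
    ContinuousLinearMap.smul_apply, ContinuousLinearMap.sub_apply, Tv]
  rfl

lemma unitary_inner {U : H →L[ℂ] H} (hU : U ∈ unitary (H →L[ℂ] H)) (v w : H) :
    (inner ℂ (U v) (U w) : ℂ) = inner ℂ v w := by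
  have h1 : (star U * U) w = w := by rw [hU.1]; rfl
  calc (inner ℂ (U v) (U w) : ℂ) = inner ℂ v ((ContinuousLinearMap.adjoint U) (U w)) :=
        (ContinuousLinearMap.adjoint_inner_right U v (U w)).symm
    _ = inner ℂ v w := by rw [← ContinuousLinearMap.star_eq_adjoint]; exact congrArg _ h1

lemma cayley_injOn : Set.InjOn (cayleyGraph H)
    {U : H →L[ℂ] H | U ∈ unitary (H →L[ℂ] H)} := by
  intro U _ V _ h
  ext v
  have hmem : Tv U v ∈ cayleyGraph H V := by
    rw [← h]; exact mem_cayleyGraph.2 ⟨v, rfl⟩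
  obtain ⟨w, hw⟩ := mem_cayleyGraph.1 hmem
  rw [Tv, Tv, mk2_ext_iff] at hw
  obtain ⟨h1, h2⟩ := hw
  have h2' : w - V w = v - U v :=
    smul_right_injective H (neg_ne_zero.2 Complex.I_ne_zero) h2
  have hv : v = w := by
    refine smul_right_injective H (two_ne_zero (α := ℂ)) ?_
    show (2:ℂ) • v = (2:ℂ) • w
    have e1 : (2:ℂ) • v = (v + U v) + (v - U v) := by module
    have e2 : (w + V w) + (w - V w) = (2:ℂ) • w := by module
    rw [e1, ← h1, ← h2', e2]
  subst hv
  refine smul_right_injective H (two_ne_zero (α := ℂ)) ?_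
  show (2:ℂ) • U v = (2:ℂ) • V v
  have e1 : (2:ℂ) • U v = (v + U v) - (v - U v) := by module
  have e2 : (v + V v) - (v - V v) = (2:ℂ) • V v := by module
  rw [e1, ← h1, ← h2', e2]

lemma cayley_lagrangian {U : H →L[ℂ] H} (hU : U ∈ unitary (H →L[ℂ] H)) :
    IsLagrangian H (cayleyGraph H U) := by
  have hin := unitary_inner hU
  apply le_antisymm
  · rintro x hx
    rw [Submodule.mem_map] at hx
    obtain ⟨y, hy, rfl⟩ := hx
    obtain ⟨v, rfl⟩ := mem_cayleyGraph.1 hy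
    rw [Submodule.mem_orthogonal]
    rintro u hu
    obtain ⟨w, rfl⟩ := mem_cayleyGraph.1 hu
    show (inner ℂ (Tv U w) ((hatJ H) (Tv U v)) : ℂ) = 0
    rw [Tv, Tv, hatJ_mk2, inner_mk2]
    simp only [inner_add_left, inner_add_right, inner_sub_left, inner_sub_right,
      inner_smul_left, inner_smul_right, inner_neg_left, inner_neg_right, map_neg,
      Complex.conj_I, hin]
    ring
  · intro x hx
    set x1 := x.fst with hx1
    set x2 := x.snd with hx2
    set c := x1 - Complex.I • x2 with hc
    have horto : ∀ v' : H, (inner ℂ (Tv U v') x : ℂ) = 0 := by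
      intro v'
      exact (Submodule.mem_orthogonal _ _).1 hx _ (mem_cayleyGraph.2 ⟨v', rfl⟩)
    set g := (x1 + Complex.I • x2) + ContinuousLinearMap.adjoint U c with hgdef
    have hg : ∀ v' : H, (inner ℂ v' g : ℂ) = 0 := by
      intro v'
      have h0 := horto v'
      rw [Tv, ← mk2_eta x, inner_mk2] at h0
      rw [hgdef, hc, inner_add_right, ContinuousLinearMap.adjoint_inner_right]
      simp only [inner_add_left, inner_add_right, inner_sub_left, inner_sub_right,
        inner_smul_left, inner_smul_right, inner_neg_left, inner_neg_right, map_neg,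
        Complex.conj_I] at h0 ⊢
      linear_combination h0
    have hg0 : g = 0 := by
      have := hg g
      rwa [inner_self_eq_zero] at this
    have hd : ContinuousLinearMap.adjoint U c = -(x1 + Complex.I • x2) :=
      eq_neg_of_add_eq_zero_right hg0
    have hUc : U (ContinuousLinearMap.adjoint U c) = c := by
      have h1 : (U * star U) c = c := by rw [hU.2]; rfl
      rwa [ContinuousLinearMap.star_eq_adjoint] at h1
    set u := -((2⁻¹ * Complex.I)) • (ContinuousLinearMap.adjoint U c) with hu
    rw [Submodule.mem_map]
    refine ⟨Tv U u, mem_cayleyGraph.2 ⟨u, rfl⟩, ?_⟩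
    show hatJ H (Tv U u) = x
    rw [Tv, hatJ_mk2, ← mk2_eta x, mk2_ext_iff]
    constructor
    · rw [hu, map_smul, hUc, hd, hc]
      match_scalars <;> (try ring_nf) <;> (try simp [Complex.I_sq]) <;> (try ring)
    · rw [hu, map_smul, hUc, hd, hc]
      match_scalars <;> (try ring_nf) <;> (try simp [Complex.I_sq]) <;> (try ring)

lemma cayley_surj {L : Submodule ℂ (Hh H)} (hL : IsLagrangian H L) :
    ∃ U ∈ unitary (H →L[ℂ] H), cayleyGraph H U = L := by
  have hJL : ∀ y ∈ L, hatJ H y ∈ Lᗮ := by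
    intro y hy; rw [← hL]; exact Submodule.mem_map_of_mem hy
  have hJLperp : ∀ z ∈ Lᗮ, hatJ H z ∈ L := by
    intro z hz
    rw [← hL] at hz
    obtain ⟨y, hy, rfl⟩ := hz
    have : hatJ H ((hatJ H).toLinearMap y) = -y := hatJ_hatJ y
    rw [this]
    exact neg_mem hy
  have hclosed : IsClosed (L : Set (Hh H)) := by
    have hpre : (L : Set (Hh H)) = (hatJ H) ⁻¹' (Lᗮ : Set (Hh H)) := by
      ext x
      simp only [Set.mem_preimage, SetLike.mem_coe]
      constructor
      · exact hJL x
      · intro hx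
        have h2 := hJLperp _ hx
        rw [hatJ_hatJ] at h2
        exact neg_mem_iff.1 h2
    rw [hpre]
    exact (Submodule.isClosed_orthogonal L).preimage (hatJ H).continuous
  haveI : CompleteSpace L := hclosed.completeSpace_coe
  -- key anticommutation
  have key : ∀ x : Hh H, L.reflection (hatJ H x) = - hatJ H (L.reflection x) := by
    intro x
    set y : Hh H := (L.starProjection x : Hh H) with hy'
    have hy : y ∈ L := L.starProjection_apply_mem x
    have hz : x - y ∈ Lᗮ := L.sub_starProjection_mem_orthogonal x
    have hx : x = y + (x - y) := by abel
    have h1 : L.reflection (hatJ H x) = -(hatJ H y) + hatJ H (x - y) := by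
      conv_lhs => rw [hx]
      rw [map_add (hatJ H), map_add (L.reflection),
        Submodule.reflection_mem_subspace_orthogonalComplement_eq_neg (hJL y hy),
        Submodule.reflection_mem_subspace_eq_self (hJLperp _ hz)]
    have h2 : L.reflection x = y - (x - y) := by
      conv_lhs => rw [hx]
      rw [map_add (L.reflection), Submodule.reflection_mem_subspace_eq_self hy,
        Submodule.reflection_mem_subspace_orthogonalComplement_eq_neg hz]
      abel
    rw [h1, h2, map_sub (hatJ H) y (x - y)]
    abel
  -- the candidate unitary
  set phim : H →L[ℂ] Hh H :=
    (WithLp.prodContinuousLinearEquiv 2 ℂ H H).symm.toContinuousLinearMap ∘L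
      ((ContinuousLinearMap.id ℂ H).prod ((-Complex.I) • ContinuousLinearMap.id ℂ H)) with hphim
  set phip : H →L[ℂ] Hh H :=
    (WithLp.prodContinuousLinearEquiv 2 ℂ H H).symm.toContinuousLinearMap ∘L
      ((ContinuousLinearMap.id ℂ H).prod (Complex.I • ContinuousLinearMap.id ℂ H)) with hphip
  set Rc : Hh H →L[ℂ] Hh H :=
    ((L.reflection).toContinuousLinearEquiv : Hh H ≃L[ℂ] Hh H).toContinuousLinearMap with hRc
  set Ud : H →L[ℂ] H := (ContinuousLinearMap.fst ℂ H H) ∘L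
      (WithLp.prodContinuousLinearEquiv 2 ℂ H H).toContinuousLinearMap ∘L Rc ∘L phim with hUd
  set Vd : H →L[ℂ] H := (ContinuousLinearMap.fst ℂ H H) ∘L
      (WithLp.prodContinuousLinearEquiv 2 ℂ H H).toContinuousLinearMap ∘L Rc ∘L phip with hVd
  have hUd_apply : ∀ v : H, Ud v = (L.reflection (mk2 v (-Complex.I • v))).fst := fun v => rfl
  have hVd_apply : ∀ w : H, Vd w = (L.reflection (mk2 w (Complex.I • w))).fst := fun w => rfl
  -- J acts as ∓i on the two model subspaces
  have hJm : ∀ v : H, hatJ H (mk2 v (-Complex.I • v)) = (-Complex.I) • (mk2 v (-Complex.I • v)) := by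
    intro v
    rw [hatJ_mk2, mk2_smul, mk2_ext_iff]
    refine ⟨rfl, ?_⟩
    rw [smul_smul]
    match_scalars <;> (try ring_nf) <;> (try simp [Complex.I_sq]) <;> (try ring)
  have hJp : ∀ w : H, hatJ H (mk2 w (Complex.I • w)) = Complex.I • (mk2 w (Complex.I • w)) := by
    intro w
    rw [hatJ_mk2, mk2_smul, mk2_ext_iff]
    refine ⟨rfl, ?_⟩
    rw [smul_smul]
    match_scalars <;> (try ring_nf) <;> (try simp [Complex.I_sq]) <;> (try ring)
  -- reflection swaps the model subspaces
  have keyE : ∀ v : H, L.reflection (mk2 v (-Complex.I • v))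
      = mk2 (Ud v) (Complex.I • Ud v) := by
    intro v
    set a : Hh H := L.reflection (mk2 v (-Complex.I • v)) with ha
    have h1 : hatJ H a = Complex.I • a := by
      have h2 := key (mk2 v (-Complex.I • v))
      rw [hJm, map_smul, ← ha] at h2
      -- h2 : (-I) • a = - hatJ H a
      have h5 := congrArg (fun z : Hh H => -z) h2
      simp only [neg_smul, neg_neg] at h5
      exact h5.symm
    have h5 : a.snd = Complex.I • a.fst := by
      have := congrArg WithLp.fst (h1 : hatJ H a = Complex.I • a)
      exact this
    calc a = mk2 a.fst a.snd := (mk2_eta a).symm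
      _ = mk2 (Ud v) (Complex.I • Ud v) := by rw [mk2_ext_iff]; exact ⟨rfl, by rw [h5, hUd_apply]⟩
  have keyF : ∀ w : H, L.reflection (mk2 w (Complex.I • w))
      = mk2 (Vd w) (-Complex.I • Vd w) := by
    intro w
    set a : Hh H := L.reflection (mk2 w (Complex.I • w)) with ha
    have h1 : hatJ H a = (-Complex.I) • a := by
      have h2 := key (mk2 w (Complex.I • w))
      rw [hJp, map_smul, ← ha] at h2
      have h5 := congrArg (fun z : Hh H => -z) h2
      simp only [neg_neg] at h5
      rw [neg_smul, ← h5]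
    have h5 : a.snd = -Complex.I • a.fst := congrArg WithLp.fst h1
    calc a = mk2 a.fst a.snd := (mk2_eta a).symm
      _ = mk2 (Vd w) (-Complex.I • Vd w) := by rw [mk2_ext_iff]; exact ⟨rfl, by rw [h5, hVd_apply]⟩
  -- U ∘ V = id
  have hUV : ∀ w : H, Ud (Vd w) = w := by
    intro w
    have h3 : L.reflection (mk2 (Vd w) (-Complex.I • Vd w)) = mk2 w (Complex.I • w) := by
      rw [← keyF, Submodule.reflection_reflection]
    rw [keyE] at h3
    exact (mk2_ext_iff.1 h3).1
  -- U is isometric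
  have hUnorm : ∀ v : H, ‖Ud v‖ = ‖v‖ := by
    intro v
    have h1 : ‖L.reflection (mk2 v (-Complex.I • v))‖ = ‖(mk2 v (-Complex.I • v) : Hh H)‖ :=
      (L.reflection).norm_map _
    rw [keyE] at h1
    have h2 := WithLp.prod_norm_sq_eq_of_L2 (mk2 (Ud v) (Complex.I • Ud v) : Hh H)
    have h3 := WithLp.prod_norm_sq_eq_of_L2 (mk2 v (-Complex.I • v) : Hh H)
    rw [h1] at h2
    rw [h3] at h2
    simp only [mk2_fst, mk2_snd, norm_smul, norm_neg, Complex.norm_I, one_mul] at h2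
    have h6 : ‖Ud v‖ ^ 2 = ‖v‖ ^ 2 := by linarith
    exact (sq_eq_sq₀ (norm_nonneg _) (norm_nonneg _)).1 h6
  have hinnerU : ∀ v w : H, (inner ℂ (Ud v) (Ud w) : ℂ) = inner ℂ v w := by
    intro v w
    exact LinearIsometry.inner_map_map ⟨(Ud : H →ₗ[ℂ] H), hUnorm⟩ v w
  have hstar : star Ud * Ud = 1 := by
    ext v
    refine ext_inner_left ℂ ?_
    intro w
    rw [ContinuousLinearMap.mul_apply, ContinuousLinearMap.one_apply,
      ContinuousLinearMap.star_eq_adjoint, ContinuousLinearMap.adjoint_inner_right, hinnerU]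
  have hUVc : Ud * Vd = 1 := by
    ext w; exact hUV w
  have hstarU : star Ud = Vd := by
    calc star Ud = star Ud * (Ud * Vd) := by rw [hUVc, mul_one]
      _ = (star Ud * Ud) * Vd := (mul_assoc _ _ _).symm
      _ = Vd := by rw [hstar, one_mul]
  refine ⟨Ud, ⟨hstar, by rw [hstarU]; exact hUVc⟩, ?_⟩
  -- the graph equality
  apply le_antisymm
  · rintro x hx
    obtain ⟨v, rfl⟩ := mem_cayleyGraph.1 hx
    have hTv : Tv Ud v = mk2 v (-Complex.I • v) + L.reflection (mk2 v (-Complex.I • v)) := by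
      rw [keyE, Tv, mk2_add, mk2_ext_iff]
      exact ⟨rfl, by module⟩
    rw [hTv, Submodule.reflection_apply]
    have : (mk2 v (-Complex.I • v) : Hh H) +
        (2 • ((L.starProjection (mk2 v (-Complex.I • v)) : Hh H)) - mk2 v (-Complex.I • v))
        = (L.starProjection (mk2 v (-Complex.I • v)) : Hh H)
          + (L.starProjection (mk2 v (-Complex.I • v)) : Hh H) := by
      rw [two_smul]; abel
    rw [this]
    exact L.add_mem (L.starProjection_apply_mem _) (L.starProjection_apply_mem _)
  · intro x hx
    set v := (2⁻¹ : ℂ) • (x.fst + Complex.I • x.snd) with hv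
    set w := (2⁻¹ : ℂ) • (x.fst - Complex.I • x.snd) with hw
    have hdecomp : x = mk2 v (-Complex.I • v) + mk2 w (Complex.I • w) := by
      rw [mk2_add, ← mk2_eta x, mk2_ext_iff]
      constructor
      · rw [hv, hw]
        match_scalars <;> (try ring_nf) <;> (try simp [Complex.I_sq]) <;> (try ring)
      · rw [hv, hw]
        match_scalars <;> (try ring_nf) <;> (try simp [Complex.I_sq]) <;> (try ring)
    have hRx : L.reflection x = x := Submodule.reflection_mem_subspace_eq_self hx
    have hxx : mk2 (Ud v) (Complex.I • Ud v) + mk2 (Vd w) (-Complex.I • Vd w) = x := by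
      rw [← keyE, ← keyF, ← map_add, ← hdecomp, hRx]
    rw [mk2_add] at hxx
    rw [mk2_add] at hdecomp
    rw [← mk2_eta x, mk2_ext_iff] at hxx hdecomp
    obtain ⟨e1, e2⟩ := hxx
    obtain ⟨d1, d2⟩ := hdecomp
    -- derive Ud v = w
    have hUvw : Ud v = w := by
      refine smul_right_injective H (two_ne_zero (α := ℂ)) ?_
      show (2:ℂ) • Ud v = (2:ℂ) • w
      have E := e2.trans d2
      have h := congrArg (fun z : H => (-Complex.I) • z) E
      simp only [smul_add, smul_smul] at h
      have c1 : (-Complex.I * Complex.I) = 1 := by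
        rw [neg_mul, Complex.I_mul_I, neg_neg]
      have c2 : (-Complex.I * -Complex.I) = -1 := by
        rw [neg_mul_neg, Complex.I_mul_I]
      rw [c1, c2] at h
      simp only [one_smul, neg_one_smul] at h
      have e1' : Ud v + Vd w = v + w := e1.trans d1
      have hexp : (2:ℂ) • Ud v = (Ud v + Vd w) + (Ud v + -Vd w) := by module
      rw [hexp, e1', h]
      module
    refine mem_cayleyGraph.2 ⟨v, ?_⟩
    rw [Tv, ← mk2_eta x, mk2_ext_iff]
    constructor
    · rw [hUvw, d1]
    · rw [hUvw, d2]
      module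

end AuxLemmas

/-- the Cayley graph map `U ↦ Ran {v ↦ ((1+U)v, -i(1-U)v)}` is a
bijection from the unitary group of `H` onto the set of lagrangian subspaces of
`Ĥ = H ⊕ H`. -/
theorem cayleyGraph_bijOn_unitary :
    Set.BijOn (cayleyGraph H)
      {U : H →L[ℂ] H | U ∈ unitary (H →L[ℂ] H)}
      {L : Submodule ℂ (Hh H) | IsLagrangian H L} := by
  refine ⟨fun U hU => cayley_lagrangian hU, cayley_injOn, fun L hL => ?_⟩
  obtain ⟨U, hU, hUL⟩ := cayley_surj hL
  exact ⟨U, hU, hUL⟩
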